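/- Let G be a finite simple graph on Fin n with edge weights w (a real number w_e for each edge e), and let L(w) be the signed weighted Laplacian of (G, w). Suppose there exists a nonempty proper subset S of the vertices such that the sum of w_e over all edges e with one endpoint in S and the other in the complement of S is strictly positive. Then the symmetric matrix L(w) has a strictly positive eigenvalue. -/

import Mathlib

open Matrix

/-- The signed weighted Laplacian of a simple graph `G` on `Fin n` with real edge
weights `w` (with `w i j = w j i` on edges): off-diagonal entries are `-w i j` on
edges and `0` otherwise, diagonal entries are the sums of incident weights. -/
def signedLaplacian {n : ℕ} (G : SimpleGraph (Fin n)) [DecidableRel G.Adj]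
    (w : Fin n → Fin n → ℝ) : Matrix (Fin n) (Fin n) ℝ :=
  fun i j =>
    if i = j then ∑ k ∈ G.neighborFinset i, w i k
    else if G.Adj i j then -w i j else 0

lemma quadform {n : ℕ} (G : SimpleGraph (Fin n)) [DecidableRel G.Adj]
    (w : Fin n → Fin n → ℝ) (S : Finset (Fin n)) :
    (fun j => if j ∈ S then (1:ℝ) else 0) ⬝ᵥ
      (signedLaplacian G w).mulVec (fun j => if j ∈ S then (1:ℝ) else 0)
    = ∑ i ∈ S, ∑ j ∈ (G.neighborFinset i).filter (fun j => j ∉ S), w i j := by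
  classical
  have key : ∀ i ∈ S, ∑ j ∈ S, signedLaplacian G w i j
      = ∑ j ∈ (G.neighborFinset i).filter (fun j => j ∉ S), w i j := by
    intro i hi
    rw [← Finset.add_sum_erase S _ hi]
    have h1 : signedLaplacian G w i i = ∑ k ∈ G.neighborFinset i, w i k := by
      simp [signedLaplacian]
    have h2 : ∑ j ∈ S.erase i, signedLaplacian G w i j
        = -∑ j ∈ (G.neighborFinset i).filter (fun j => j ∈ S), w i j := by
      have : ∀ j ∈ S.erase i, signedLaplacian G w i j
          = if G.Adj i j then -w i j else 0 := by
        intro j hj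
        have : i ≠ j := (Finset.ne_of_mem_erase hj).symm
        simp [signedLaplacian, this]
      rw [Finset.sum_congr rfl this]
      rw [← Finset.sum_filter, ← Finset.sum_neg_distrib]
      apply Finset.sum_congr _ (fun _ _ => rfl)
      ext j
      simp only [Finset.mem_filter, Finset.mem_erase, SimpleGraph.mem_neighborFinset]
      constructor
      · rintro ⟨⟨hne, hjS⟩, hadj⟩; exact ⟨hadj, hjS⟩
      · rintro ⟨hadj, hjS⟩; exact ⟨⟨(G.ne_of_adj hadj).symm, hjS⟩, hadj⟩
    rw [h1, h2, ← Finset.sum_filter_add_sum_filter_not (G.neighborFinset i) (fun j => j ∈ S)]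
    ring
  have hx : ∀ (t : Fin n → ℝ), (∑ i, (if i ∈ S then (1:ℝ) else 0) * t i) = ∑ i ∈ S, t i := by
    intro t
    simp only [ite_mul, one_mul, zero_mul, Finset.sum_ite_mem, Finset.univ_inter]
  calc (fun j => if j ∈ S then (1:ℝ) else 0) ⬝ᵥ
      (signedLaplacian G w).mulVec (fun j => if j ∈ S then (1:ℝ) else 0)
      = ∑ i, (if i ∈ S then (1:ℝ) else 0) * ∑ j, signedLaplacian G w i j * (if j ∈ S then (1:ℝ) else 0) := rfl
    _ = ∑ i ∈ S, ∑ j, signedLaplacian G w i j * (if j ∈ S then (1:ℝ) else 0) := hx _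
    _ = ∑ i ∈ S, ∑ j ∈ S, signedLaplacian G w i j := by
        refine Finset.sum_congr rfl fun i _ => ?_
        rw [← hx (fun j => signedLaplacian G w i j)]
        exact Finset.sum_congr rfl fun j _ => by rw [mul_comm]
    _ = _ := Finset.sum_congr rfl key

/-- If the total weight of the edges across some nonempty proper vertex
cut is strictly positive, then the signed weighted Laplacian has a strictly positive
eigenvalue. -/
theorem positive_cut_implies_positive_eigenvalue (n : ℕ)
    (G : SimpleGraph (Fin n)) [DecidableRel G.Adj]
    (w : Fin n → Fin n → ℝ) (hsymm : ∀ i j : Fin n, w i j = w j i)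
    (S : Finset (Fin n)) (hS : S.Nonempty) (hS' : S ≠ Finset.univ)
    (hcut : 0 < ∑ i ∈ S, ∑ j ∈ (G.neighborFinset i).filter (fun j => j ∉ S), w i j) :
    ∃ μ : ℝ, 0 < μ ∧ ∃ v : Fin n → ℝ, v ≠ 0 ∧ (signedLaplacian G w).mulVec v = μ • v := by
  classical
  set L := signedLaplacian G w with hL
  have hHerm : L.IsHermitian := by
    ext i j
    simp only [conjTranspose_apply, star_trivial, hL, signedLaplacian]
    rcases eq_or_ne i j with rfl | h
    · rfl
    · have h' : ¬ j = i := fun e => h e.symm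
      have h'' : ¬ i = j := h
      simp only [h', h'', if_false]
      by_cases ha : G.Adj i j
      · simp [ha, G.adj_symm ha, hsymm i j]
      · have : ¬ G.Adj j i := fun e => ha (G.adj_symm e)
        simp [ha, this]
  have hH' : (-L).IsHermitian := hHerm.neg
  by_cases h : ∃ i, hH'.eigenvalues i < 0
  · obtain ⟨i, hi⟩ := h
    refine ⟨-hH'.eigenvalues i, by linarith, ⇑(hH'.eigenvectorBasis i), ?_, ?_⟩
    · intro hv
      refine hH'.eigenvectorBasis.orthonormal.ne_zero i ?_
      apply (WithLp.equiv 2 _).injective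
      simpa using hv
    · have h2 := hH'.mulVec_eigenvectorBasis i
      rw [neg_mulVec, neg_eq_iff_eq_neg] at h2
      rw [h2, ← neg_smul]
  · push_neg at h
    have hpsd : (-L).PosSemidef := hH'.posSemidef_iff_eigenvalues_nonneg.mpr h
    set x : Fin n → ℝ := fun j => if j ∈ S then (1:ℝ) else 0 with hxdef
    have h0 := hpsd.dotProduct_mulVec_nonneg x
    rw [star_trivial, neg_mulVec, dotProduct_neg] at h0
    have hq := quadform G w S
    rw [← hL, ← hxdef] at hq
    rw [hq] at h0
    linarith
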